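/- arXiv:2409.07864 — 2 statements merged into one kernel-verified Lean document; each statement's English description precedes it below -/
import Mathlib

section
/- Let k be a field and let K = k(t₁, …, tₙ) be a purely transcendental extension with n ≥ 1, and let L be a finite extension of K. Then for every integer l ≥ 1, the element t₁^l is not divisible by p in the multiplicative group L*, for any prime p with p > l and p not dividing [L : K]. In particular, no power of t₁ is a divisible element of L*. -/
open MvPolynomial

theorem aux_pow_dvd {R : Type*} [CommRing R] [IsDomain R] [UniqueFactorizationMonoid R]
    {K : Type*} [Field K] [Algebra R K] [IsFractionRing R K]
    {q : R} (hq : Prime q) {p m : ℕ} (hp : p.Prime)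
    (h : ∃ y : K, y ^ p = (algebraMap R K q) ^ m) : p ∣ m := by
  obtain ⟨y, hy⟩ := h
  obtain ⟨⟨a, s⟩, hs⟩ := IsLocalization.surj (nonZeroDivisors R) y
  simp only at hs
  have hs0 : (s : R) ≠ 0 := nonZeroDivisors.ne_zero s.2
  have key : a ^ p = q ^ m * (s : R) ^ p := by
    apply IsFractionRing.injective R K
    rw [map_pow, ← hs, mul_pow, hy, map_mul, map_pow, map_pow]
  have ha0 : a ≠ 0 := by
    intro h0
    rw [h0, zero_pow hp.ne_zero] at key
    exact (mul_ne_zero (pow_ne_zero _ hq.ne_zero) (pow_ne_zero _ hs0)) key.symm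
  have fa := FiniteMultiplicity.of_prime_left hq ha0
  have fs := FiniteMultiplicity.of_prime_left hq hs0
  have e1 : emultiplicity q (a ^ p) = emultiplicity q (q ^ m * (s : R) ^ p) := by rw [key]
  have fq := FiniteMultiplicity.of_prime_left hq hq.ne_zero
  rw [emultiplicity_pow hq, emultiplicity_mul hq, emultiplicity_pow hq,
    emultiplicity_pow hq, fq.emultiplicity_self, mul_one, fa.emultiplicity_eq_multiplicity,
    fs.emultiplicity_eq_multiplicity] at e1
  set A := multiplicity q a
  set B := multiplicity q s
  have e2 : p * A = m + p * B := by exact_mod_cast e1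
  have hBA : B ≤ A := by
    by_contra hc
    push_neg at hc
    have : p * A < p * B := (Nat.mul_lt_mul_left hp.pos).mpr hc
    omega
  exact ⟨A - B, by rw [Nat.mul_sub]; omega⟩

/-- Let `K = k(t₁, …, tₙ)` (`n ≥ 1`) and let `L` be a finite extension of `K`.
Then for every `l ≥ 1`, the element `t₁ˡ` is not divisible by `p` in `Lˣ` for
any prime `p > l` not dividing `[L : K]`; in particular no power of `t₁` is a
divisible element of `Lˣ`. -/
theorem stmt2 {k : Type*} [Field k] {n : ℕ} (hn : 0 < n)
    (L : Type*) [Field L] [Algebra (FractionRing (MvPolynomial (Fin n) k)) L]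
    [FiniteDimensional (FractionRing (MvPolynomial (Fin n) k)) L]
    (t : L)
    (ht : t = algebraMap (FractionRing (MvPolynomial (Fin n) k)) L
      (algebraMap (MvPolynomial (Fin n) k) (FractionRing (MvPolynomial (Fin n) k))
        (X ⟨0, hn⟩))) :
    (∀ l : ℕ, 1 ≤ l → ∀ p : ℕ, p.Prime → l < p →
      ¬ (p ∣ Module.finrank (FractionRing (MvPolynomial (Fin n) k)) L) →
      ¬ ∃ x : Lˣ, (x : L) ^ p = t ^ l) ∧
    (∀ l : ℕ, 1 ≤ l → ¬ ∀ m : ℕ, 0 < m → ∃ x : Lˣ, (x : L) ^ m = t ^ l) := by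
  have hq : Prime (X ⟨0, hn⟩ : MvPolynomial (Fin n) k) := by
    obtain ⟨m, rfl⟩ : ∃ m, n = m + 1 := ⟨n - 1, (Nat.succ_pred_eq_of_pos hn).symm⟩
    have h0 : (⟨0, hn⟩ : Fin (m + 1)) = 0 := rfl
    rw [h0, ← MulEquiv.prime_iff (MvPolynomial.finSuccEquiv k m).toMulEquiv]
    have : ((MvPolynomial.finSuccEquiv k m).toMulEquiv) (X 0) = Polynomial.X :=
      MvPolynomial.finSuccEquiv_X_zero
    rw [this]
    exact Polynomial.prime_X
  set K := FractionRing (MvPolynomial (Fin n) k) with hK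
  set d := Module.finrank K L with hd
  have hd0 : 0 < d := Module.finrank_pos
  have main : ∀ l : ℕ, 1 ≤ l → ∀ p : ℕ, p.Prime → l < p → ¬ (p ∣ d) →
      ¬ ∃ x : Lˣ, (x : L) ^ p = t ^ l := by
    rintro l hl p hp hlp hpd ⟨x, hx⟩
    have hnorm : (Algebra.norm K (x : L)) ^ p
        = (algebraMap (MvPolynomial (Fin n) k) K (X ⟨0, hn⟩)) ^ (l * d) := by
      rw [← map_pow, hx, ht, ← map_pow, ← map_pow, Algebra.norm_algebraMap, map_pow, ← pow_mul]
    have hdvd : p ∣ l * d := aux_pow_dvd hq hp ⟨Algebra.norm K (x : L), hnorm⟩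
    rcases hp.dvd_mul.mp hdvd with h | h
    · exact absurd (Nat.le_of_dvd (by omega) h) (by omega)
    · exact hpd h
  refine ⟨main, fun l hl hall => ?_⟩
  obtain ⟨p, hpge, hp⟩ := Nat.exists_infinite_primes (max l d + 1)
  have hpd : ¬ p ∣ d := fun h => by
    have := Nat.le_of_dvd hd0 h
    omega
  exact main l hl p hp (by omega) hpd (hall p hp.pos)
end

section
/- Let F ⊆ L be a finite Galois extension of fields of characteristic zero, and let p/q ∈ L(t) be a rational function in one variable with p, q ∈ L[t], q ≠ 0, such that p(n)/q(n) ∈ F for all sufficiently large natural numbers n. Then p/q, as an element of L(t), lies in the subfield F(t). -/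
open Polynomial

/-- Fixed elements lie in the base subfield. -/
lemma fixed_mem_subfield {L : Type*} [Field L] (F : Subfield L)
    [FiniteDimensional F L] [IsGalois F L] (x : L)
    (hx : ∀ σ : L ≃ₐ[F] L, σ x = x) : x ∈ Set.range (algebraMap F L) := by
  have hx' : x ∈ IntermediateField.fixedField
      (IntermediateField.fixingSubgroup (⊥ : IntermediateField F L)) := by
    intro σ
    exact hx σ.1
  rw [IsGalois.fixedField_fixingSubgroup (⊥ : IntermediateField F L),
    IntermediateField.mem_bot] at hx'
  exact hx'

/-- Let `F ⊆ L` be a finite Galois extension of fields of characteristic zero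
and `p, q ∈ L[t]` with `q ≠ 0` such that `p(n)/q(n) ∈ F` for all sufficiently
large natural numbers `n` (with `q(n) ≠ 0`).  Then `p/q ∈ F(t)`: there are
polynomials `p', q'` over `F` with `q' ≠ 0` and `p·q' = q·p'`. -/
theorem stmt13 {L : Type*} [Field L] [CharZero L] (F : Subfield L)
    [FiniteDimensional F L] [IsGalois F L]
    (p q : Polynomial L) (hq : q ≠ 0)
    (h : ∃ n₀ : ℕ, ∀ n : ℕ, n₀ ≤ n → q.eval (n : L) ≠ 0 →
      p.eval (n : L) / q.eval (n : L) ∈ F) :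
    ∃ p' q' : Polynomial F, q' ≠ 0 ∧
      p * q'.map (algebraMap F L) = q * p'.map (algebraMap F L) := by
  classical
  obtain ⟨n₀, h⟩ := h
  -- The set of good evaluation points is infinite.
  have hSfin : {n : ℕ | q.eval (n : L) = 0}.Finite := by
    apply Set.Finite.of_finite_image (f := (Nat.cast : ℕ → L))
    · exact (Polynomial.finite_setOf_isRoot hq).subset (by rintro x ⟨n, hn, rfl⟩; exact hn)
    · exact fun a _ b _ hab => Nat.cast_injective hab
  have hSinf : {n : ℕ | n₀ ≤ n ∧ q.eval (n : L) ≠ 0}.Infinite := by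
    have heq : {n : ℕ | n₀ ≤ n ∧ q.eval (n : L) ≠ 0} =
        Set.Ici n₀ \ {n : ℕ | q.eval (n : L) = 0} := by
      ext n; simp [Set.mem_diff, Set.mem_Ici]
    rw [heq]
    exact (Set.Ici_infinite n₀).diff hSfin
  -- Key identity: for every `σ`, `p^σ * q = p * q^σ`.
  have key : ∀ σ : L ≃ₐ[F] L,
      p.map (σ : L →+* L) * q = p * q.map (σ : L →+* L) := by
    intro σ
    apply Polynomial.eq_of_infinite_eval_eq
    apply Set.Infinite.mono ?_ (hSinf.image (fun a _ b _ hab => Nat.cast_injective hab))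
    rintro x ⟨n, ⟨hn₀, hqn⟩, rfl⟩
    obtain ⟨c, hc⟩ : ∃ c : F, (c : L) = p.eval (n : L) / q.eval (n : L) :=
      ⟨⟨_, h n hn₀ hqn⟩, rfl⟩
    have hp : p.eval (n : L) = (c : L) * q.eval (n : L) := by
      rw [hc, div_mul_cancel₀]
      exact hqn
    have hσc : (σ : L →+* L) (c : L) = (c : L) := σ.commutes c
    simp only [Set.mem_setOf_eq, eval_mul, Polynomial.eval_map, Polynomial.eval₂_at_natCast]
    rw [hp]
    rw [map_mul, hσc]
    ring
  -- Construct the invariant numerator and denominator.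
  set Q : L[X] := ∏ σ : L ≃ₐ[F] L, q.map (σ : L →+* L) with hQ
  set P : L[X] := p * ∏ σ ∈ Finset.univ.erase (1 : L ≃ₐ[F] L),
      q.map (σ : L →+* L) with hP
  have hmap1 : q.map ((1 : L ≃ₐ[F] L) : L →+* L) = q := by
    have : ((1 : L ≃ₐ[F] L) : L →+* L) = RingHom.id L := by ext x; rfl
    rw [this, Polynomial.map_id]
  have hQne : Q ≠ 0 := by
    rw [hQ]
    apply Finset.prod_ne_zero_iff.2
    intro σ _
    exact (Polynomial.map_ne_zero_iff (σ : L →+* L).injective).2 hq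
  have hPQ : p * Q = q * P := by
    rw [hQ, hP, ← Finset.mul_prod_erase _ _ (Finset.mem_univ (1 : L ≃ₐ[F] L)), hmap1]
    ring
  -- composition of maps
  have hcomp : ∀ (σ τ : L ≃ₐ[F] L) (r : L[X]),
      (r.map (τ : L →+* L)).map (σ : L →+* L) = r.map ((σ * τ : L ≃ₐ[F] L) : L →+* L) := by
    intro σ τ r
    rw [Polynomial.map_map]
    rfl
  -- Q is invariant
  have hQinv : ∀ σ : L ≃ₐ[F] L, Q.map (σ : L →+* L) = Q := by
    intro σ
    rw [hQ, Polynomial.map_prod]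
    simp only [hcomp]
    exact Fintype.prod_equiv (Equiv.mulLeft σ) _ _ (fun τ => rfl)
  -- P is invariant
  have hPinv : ∀ σ : L ≃ₐ[F] L, P.map (σ : L →+* L) = P := by
    intro σ
    have hqσ : q.map (σ : L →+* L) ≠ 0 :=
      (Polynomial.map_ne_zero_iff (σ : L →+* L).injective).2 hq
    apply mul_right_cancel₀ hqσ
    have h1 : P.map (σ : L →+* L) * q.map (σ : L →+* L) = p.map (σ : L →+* L) * Q := by
      rw [hP, Polynomial.map_mul, Polynomial.map_prod]
      simp only [hcomp]
      rw [mul_assoc]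
      congr 1
      have h2 : (∏ τ ∈ Finset.univ.erase (1 : L ≃ₐ[F] L),
            q.map ((σ * τ : L ≃ₐ[F] L) : L →+* L)) * q.map ((σ * 1 : L ≃ₐ[F] L) : L →+* L)
          = ∏ τ : L ≃ₐ[F] L, q.map ((σ * τ : L ≃ₐ[F] L) : L →+* L) :=
        Finset.prod_erase_mul _ _ (Finset.mem_univ (1 : L ≃ₐ[F] L))
      rw [mul_one] at h2
      rw [h2, hQ]
      exact Fintype.prod_equiv (Equiv.mulLeft σ) _ _ (fun τ => rfl)
    rw [h1, hP, hQ, ← Finset.mul_prod_erase _ _ (Finset.mem_univ (1 : L ≃ₐ[F] L)), hmap1,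
      ← mul_assoc, key σ]
    ring
  -- Coefficients of P and Q lie in F.
  have hmemP : P ∈ Polynomial.lifts (algebraMap F L) := by
    rw [Polynomial.lifts_iff_coeff_lifts]
    intro n
    apply fixed_mem_subfield
    intro σ
    have := congrArg (fun r => Polynomial.coeff r n) (hPinv σ)
    simpa [Polynomial.coeff_map] using this
  have hmemQ : Q ∈ Polynomial.lifts (algebraMap F L) := by
    rw [Polynomial.lifts_iff_coeff_lifts]
    intro n
    apply fixed_mem_subfield
    intro σ
    have := congrArg (fun r => Polynomial.coeff r n) (hQinv σ)
    simpa [Polynomial.coeff_map] using this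
  obtain ⟨p', hp'⟩ := hmemP
  obtain ⟨q', hq'⟩ := hmemQ
  simp only [Polynomial.coe_mapRingHom] at hp' hq'
  refine ⟨p', q', ?_, ?_⟩
  · rintro rfl
    rw [Polynomial.map_zero] at hq'
    exact hQne hq'.symm
  · rw [hp', hq']
    exact hPQ
end
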